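/- Let G be a finite connected simple graph with n vertices v₁,…,vₙ and m edges, all of whose vertices have degree at least 1. Then for every complex number λ, (λ² − 1)^n · (deg v₁ ⋯ deg vₙ) · det(λ·I_{2m} − U) = (λ² − 1)^m · det((λ² + 1)·D − 2λ·A(G)). (This is the second equality of Theorem 4.1, cleared of denominators and negative exponents.) -/

import Mathlib

open Matrix SimpleGraph Polynomial
open Kronecker

/-- The matrix `T(G)`: `T u v = 1 / deg u` if `(u,v)` is a dart of `G`, else `0`. -/
noncomputable def quantumT {V : Type*} [Fintype V] (G : SimpleGraph V)
    [DecidableRel G.Adj] : Matrix V V ℂ :=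
  fun u v => if G.Adj u v then (1 : ℂ) / (G.degree u : ℂ) else 0

/-- The transition matrix `U` of the discrete-time quantum walk on `G`, indexed by darts:
`U e f = 2 / deg (t f)` if `t f = o e` and `f ≠ e⁻¹`, `U e f = 2 / deg (t f) - 1` if
`f = e⁻¹`, and `0` otherwise. -/
noncomputable def quantumU {V : Type*} [Fintype V] (G : SimpleGraph V)
    [DecidableRel G.Adj] [DecidableEq V] : Matrix G.Dart G.Dart ℂ :=
  fun e f =>
    if f.toProd.2 = e.toProd.1 ∧ f ≠ e.symm then (2 : ℂ) / (G.degree f.toProd.2 : ℂ)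
    else if f = e.symm then (2 : ℂ) / (G.degree f.toProd.2 : ℂ) - 1
    else 0


section Invol
variable {α : Type*} [Fintype α] [DecidableEq α]

noncomputable def involEquiv [LinearOrder α] (σ : α → α) (h2 : ∀ a, σ (σ a) = a)
    (h1 : ∀ a, σ a ≠ a) : {a : α // a < σ a} × Bool ≃ α where
  toFun p := if p.2 then σ p.1.1 else p.1.1
  invFun a := if h : a < σ a then (⟨a, h⟩, false) else
    (⟨σ a, by
      rw [h2 a]
      exact lt_of_le_of_ne (not_lt.mp h) (h1 a)⟩, true)
  left_inv p := by
    obtain ⟨⟨a, ha⟩, b⟩ := p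
    cases b with
    | false => simp [ha]
    | true =>
      have hn : ¬ σ a < σ (σ a) := by rw [h2 a]; exact not_lt.mpr ha.le
      simp only [if_true]
      rw [dif_neg hn]
      refine Prod.ext ?_ rfl
      exact Subtype.ext (h2 a)
  right_inv a := by
    by_cases h : a < σ a
    · simp [h]
    · simp only [dif_neg h]
      simpa using h2 a

omit [Fintype α] [DecidableEq α] in
lemma involEquiv_apply_not [LinearOrder α] (σ : α → α) (h2 : ∀ a, σ (σ a) = a)
    (h1 : ∀ a, σ a ≠ a) (p : {a : α // a < σ a}) (b : Bool) :
    σ (involEquiv σ h2 h1 (p, b)) = involEquiv σ h2 h1 (p, !b) := by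
  cases b <;> simp [involEquiv, h2]

lemma invol_det (σ : α → α) (h2 : ∀ a, σ (σ a) = a) (h1 : ∀ a, σ a ≠ a) (lam : ℂ) :
    (lam • (1 : Matrix α α ℂ) + Matrix.of fun a b => if b = σ a then (1:ℂ) else 0).det
      = (lam ^ 2 - 1) ^ (Fintype.card α / 2) := by
  letI : LinearOrder α := LinearOrder.lift' (Fintype.equivFin α) (Equiv.injective _)
  set e := involEquiv σ h2 h1 with he
  set M := lam • (1 : Matrix α α ℂ) + Matrix.of fun a b => if b = σ a then (1:ℂ) else 0 with hM
  have hcard : Fintype.card α = 2 * Fintype.card {a : α // a < σ a} := by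
    rw [← Fintype.card_congr e]
    simp [Fintype.card_prod, mul_comm]
  have hsub : M.submatrix e e =
      kroneckerMap (· * ·) (1 : Matrix {a : α // a < σ a} {a : α // a < σ a} ℂ)
        (Matrix.of fun b c : Bool => if b = c then lam else 1) := by
    ext ⟨p, b⟩ ⟨q, c⟩
    simp only [submatrix_apply, hM, Matrix.add_apply, Matrix.smul_apply, Matrix.one_apply,
      Matrix.of_apply, kroneckerMap_apply, smul_eq_mul]
    have hiff : e (q, c) = σ (e (p, b)) ↔ (q = p ∧ c = !b) := by
      rw [involEquiv_apply_not σ h2 h1 p b, e.injective.eq_iff]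
      simp [Prod.ext_iff, eq_comm]
    have hiff2 : e (p, b) = e (q, c) ↔ (p = q ∧ b = c) := by
      rw [e.injective.eq_iff]; simp [Prod.ext_iff]
    by_cases hpq : p = q
    · subst hpq
      by_cases hbc : b = c
      · subst hbc
        simp [hiff2, hiff, Matrix.one_apply]
      · have hcb : c = !b := by
          cases b <;> cases c <;> first | rfl | exact absurd rfl hbc
        subst hcb
        have h3 : e (p, !b) = σ (e (p, b)) := hiff.mpr ⟨rfl, rfl⟩
        simp only [hiff2, hbc, h3, Matrix.one_apply, if_true, if_pos rfl]
        simp only [false_and, and_false, if_false, smul_zero, zero_add, one_mul, and_true]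
        rw [if_neg (fun h => absurd h.symm (h1 _))]
        ring
    · simp [hiff2, hiff, hpq, Ne.symm hpq, Matrix.one_apply]
  have hdet2 : (Matrix.of fun b c : Bool => if b = c then lam else 1).det = lam ^ 2 - 1 := by
    rw [← Matrix.det_submatrix_equiv_self finTwoEquiv, Matrix.det_fin_two]
    simp [finTwoEquiv]
    ring
  calc M.det = (M.submatrix e e).det := (Matrix.det_submatrix_equiv_self e M).symm
    _ = (lam ^ 2 - 1) ^ (Fintype.card α / 2) := by
        rw [hsub, Matrix.det_kronecker, Matrix.det_one, one_pow, one_mul, hdet2, hcard]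
        simp [Nat.mul_div_cancel_left]

end Invol

section Graph
variable {V : Type*} [Fintype V] [DecidableEq V] (G : SimpleGraph V) [DecidableRel G.Adj]

noncomputable def Smat : Matrix G.Dart G.Dart ℂ := Matrix.of fun e f => if f = e.symm then (1:ℂ) else 0
noncomputable def Lmat : Matrix G.Dart V ℂ := Matrix.of fun e v => if e.toProd.1 = v then (1:ℂ) else 0
noncomputable def Cmat : Matrix V G.Dart ℂ := Matrix.of fun v f => if f.toProd.2 = v then (2:ℂ) else 0
noncomputable def Dmat : Matrix V V ℂ := Matrix.diagonal fun v => (G.degree v : ℂ)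

lemma Smat_mul_Smat : Smat G * Smat G = 1 := by
  ext e f
  simp only [Matrix.mul_apply, Smat, Matrix.of_apply, Matrix.one_apply]
  rw [Finset.sum_eq_single e.symm]
  · simp [SimpleGraph.Dart.symm_symm, eq_comm]
  · intro g _ hg
    rw [if_neg ?_]; · simp
    intro hgg; exact hg (by simp [hgg])
  · simp

lemma dart_sum_pair (u v : V) (x : ℂ) :
    (∑ e : G.Dart, if e.toProd.1 = v ∧ e.toProd.2 = u then x else 0)
      = if G.Adj v u then x else 0 := by
  by_cases h : G.Adj v u
  · rw [Finset.sum_eq_single (⟨(v,u), h⟩ : G.Dart)]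
    · simp [h]
    · intro g _ hg
      rw [if_neg]
      intro ⟨h1, h2⟩
      exact hg (SimpleGraph.Dart.ext _ _ (Prod.ext h1 h2))
    · simp
  · rw [Finset.sum_eq_zero]
    simp only [if_neg h]
    intro e _
    rw [if_neg]
    intro ⟨h1, h2⟩
    exact h (h1 ▸ h2 ▸ e.adj)

lemma dart_sum_snd_card (u : V) :
    (∑ e : G.Dart, if e.toProd.2 = u then (1:ℂ) else 0) = (G.degree u : ℂ) := by
  rw [Finset.sum_boole]
  norm_cast
  rw [← SimpleGraph.dart_fst_fiber_card_eq_degree G u]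
  apply Finset.card_bij (fun d _ => d.symm)
  · intro d hd
    simp only [Finset.mem_filter, Finset.mem_univ, true_and] at hd ⊢
    simpa using hd
  · intro d1 h1 d2 h2 h
    simpa using congrArg SimpleGraph.Dart.symm h
  · intro d hd
    refine ⟨d.symm, ?_, by simp⟩
    simp only [Finset.mem_filter, Finset.mem_univ, true_and] at hd ⊢
    simpa using hd

end Graph

section Products
variable {V : Type*} [Fintype V] [DecidableEq V] (G : SimpleGraph V) [DecidableRel G.Adj]

noncomputable def Dinv : Matrix V V ℂ := Matrix.diagonal fun v => ((G.degree v : ℂ))⁻¹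

lemma LDC_eq : Lmat G * Dinv G * Cmat G =
    Matrix.of fun e f : G.Dart =>
      if f.toProd.2 = e.toProd.1 then 2 / (G.degree f.toProd.2 : ℂ) else 0 := by
  ext e f
  rw [Matrix.mul_apply, Matrix.of_apply]
  by_cases h : f.toProd.2 = e.toProd.1
  · rw [if_pos h, Finset.sum_eq_single e.toProd.1]
    · simp only [Lmat, Cmat, Dinv, Matrix.mul_diagonal, Matrix.of_apply, if_pos rfl, if_pos h,
        Matrix.diagonal_apply_eq, div_eq_mul_inv, one_mul, mul_comm, h]
      rw [if_pos trivial, if_pos trivial, h]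
      ring
    · intro v _ hv
      simp [Lmat, Dinv, Matrix.mul_diagonal, Ne.symm hv]
    · simp
  · rw [if_neg h, Finset.sum_eq_zero]
    intro v _
    by_cases hv : e.toProd.1 = v
    · have : ¬ f.toProd.2 = v := fun hh => h (hv ▸ hh)
      simp [Cmat, this]
    · simp [Lmat, Dinv, Matrix.mul_diagonal, hv]

lemma quantumU_eq : quantumU G = Lmat G * Dinv G * Cmat G - Smat G := by
  rw [LDC_eq]
  ext e f
  simp only [quantumU, Matrix.sub_apply, Matrix.of_apply, Smat]
  by_cases hs : f = e.symm
  · have h2 : f.toProd.2 = e.toProd.1 := by rw [hs]; rfl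
    simp [hs, h2, SimpleGraph.Dart.symm_ne]
  · by_cases h2 : f.toProd.2 = e.toProd.1
    · simp [hs, h2]
    · simp [hs, h2]

lemma CL_eq : Cmat G * Lmat G = (2:ℂ) • (G.adjMatrix ℂ) := by
  ext u v
  simp only [Matrix.mul_apply, Cmat, Lmat, Matrix.of_apply, Matrix.smul_apply,
    SimpleGraph.adjMatrix_apply, smul_eq_mul, ite_mul, mul_ite, mul_one, mul_zero, zero_mul]
  rw [if_congr (G.adj_comm u v) rfl rfl, ← dart_sum_pair G u v (2:ℂ)]
  refine Finset.sum_congr rfl fun e _ => ?_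
  by_cases h1 : e.toProd.2 = u <;> by_cases h2 : e.toProd.1 = v <;> simp [h1, h2]

lemma SL_eq : Smat G * Lmat G = Matrix.of fun (e : G.Dart) v => if e.toProd.2 = v then (1:ℂ) else 0 := by
  ext e v
  simp only [Matrix.mul_apply, Smat, Lmat, Matrix.of_apply, ite_mul, one_mul, zero_mul]
  rw [Finset.sum_eq_single e.symm]
  · simp [SimpleGraph.Dart.symm]
    congr
  · intro g _ hg; rw [if_neg hg]
  · simp

lemma CSL_eq : Cmat G * (Smat G * Lmat G) = (2:ℂ) • Dmat G := by
  rw [SL_eq]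
  ext u v
  simp only [Matrix.mul_apply, Cmat, Matrix.of_apply, Matrix.smul_apply, Dmat,
    Matrix.diagonal_apply, smul_eq_mul, ite_mul, mul_ite, mul_one, mul_zero, zero_mul]
  by_cases huv : u = v
  · subst huv
    rw [if_pos rfl, mul_comm, ← dart_sum_snd_card G u, Finset.sum_mul]
    refine Finset.sum_congr rfl fun e _ => ?_
    by_cases h : e.toProd.2 = u <;> simp [h]
  · rw [if_neg huv, Finset.sum_eq_zero]
    intro e _
    by_cases h1 : e.toProd.2 = u
    · have h2 : ¬ e.toProd.2 = v := fun hh => huv (h1 ▸ hh)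
      simp [h1, h2, huv]
    · simp [h1]

end Products

section Generic
variable {V : Type*} [Fintype V] [DecidableEq V] (G : SimpleGraph V) [DecidableRel G.Adj]

lemma det_Q (lam : ℂ) : (lam • (1 : Matrix G.Dart G.Dart ℂ) + Smat G).det
    = (lam ^ 2 - 1) ^ G.edgeFinset.card := by
  have h := invol_det (SimpleGraph.Dart.symm : G.Dart → G.Dart)
    SimpleGraph.Dart.symm_symm SimpleGraph.Dart.symm_ne lam
  have hcard : Fintype.card G.Dart / 2 = G.edgeFinset.card := by
    rw [SimpleGraph.dart_card_eq_twice_card_edges]; omega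
  rw [← hcard]
  exact h

theorem generic_case (hdeg : ∀ v : V, 1 ≤ G.degree v) (lam : ℂ)
    (hlam : lam ^ 2 - 1 ≠ 0) :
    (lam ^ 2 - 1) ^ (Fintype.card V) * (∏ v : V, (G.degree v : ℂ)) *
        (lam • (1 : Matrix G.Dart G.Dart ℂ) - quantumU G).det =
      (lam ^ 2 - 1) ^ G.edgeFinset.card *
        ((lam ^ 2 + 1) • (Matrix.diagonal fun v => (G.degree v : ℂ)) -
          (2 * lam) • G.adjMatrix ℂ).det := by
  have hdegC : ∀ v, (G.degree v : ℂ) ≠ 0 := fun v =>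
    Nat.cast_ne_zero.mpr (Nat.one_le_iff_ne_zero.mp (hdeg v))
  set Q : Matrix G.Dart G.Dart ℂ := lam • 1 + Smat G with hQ
  set Qi : Matrix G.Dart G.Dart ℂ := (lam ^ 2 - 1)⁻¹ • (lam • 1 - Smat G) with hQi
  have h1 : ∀ M : Matrix G.Dart G.Dart ℂ, (lam • (1 : Matrix G.Dart G.Dart ℂ)) * M = lam • M :=
    fun M => by rw [smul_mul_assoc, one_mul]
  have h2 : ∀ M : Matrix G.Dart G.Dart ℂ, M * (lam • (1 : Matrix G.Dart G.Dart ℂ)) = lam • M :=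
    fun M => by rw [mul_smul_comm, mul_one]
  have key1 : (lam • 1 - Smat G) * Q = (lam ^ 2 - 1) • (1 : Matrix G.Dart G.Dart ℂ) := by
    simp only [hQ, mul_add, add_mul, mul_sub, sub_mul, h1, h2, Smat_mul_Smat, smul_smul,
      smul_add, smul_sub]
    rw [← pow_two, sub_smul, one_smul]
    abel
  have key2 : Q * (lam • 1 - Smat G) = (lam ^ 2 - 1) • (1 : Matrix G.Dart G.Dart ℂ) := by
    simp only [hQ, mul_add, add_mul, mul_sub, sub_mul, h1, h2, Smat_mul_Smat, smul_smul,
      smul_add, smul_sub]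
    rw [← pow_two, sub_smul, one_smul]
    abel
  letI iQ : Invertible Q :=
    ⟨Qi, by rw [hQi, smul_mul_assoc, key1, smul_smul, inv_mul_cancel₀ hlam, one_smul],
      by rw [hQi, mul_smul_comm, key2, smul_smul, inv_mul_cancel₀ hlam, one_smul]⟩
  letI iD : Invertible (Dmat G) :=
    ⟨Dinv G,
      by
        rw [Dinv, Dmat, Matrix.diagonal_mul_diagonal, ← Matrix.diagonal_one]
        exact congrArg Matrix.diagonal (funext fun v => inv_mul_cancel₀ (hdegC v)),
      by
        rw [Dinv, Dmat, Matrix.diagonal_mul_diagonal, ← Matrix.diagonal_one]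
        exact congrArg Matrix.diagonal (funext fun v => mul_inv_cancel₀ (hdegC v))⟩
  have hiQ : ⅟Q = Qi := rfl
  have hiD : ⅟(Dmat G) = Dinv G := rfl
  have hb11 := Matrix.det_fromBlocks₁₁ Q (Lmat G) (Cmat G) (Dmat G)
  have hb22 := Matrix.det_fromBlocks₂₂ Q (Lmat G) (Cmat G) (Dmat G)
  have hA : Q - Lmat G * ⅟(Dmat G) * Cmat G = lam • 1 - quantumU G := by
    rw [hiD, quantumU_eq, hQ]
    abel
  have hC : Cmat G * ⅟Q * Lmat G
      = (lam ^ 2 - 1)⁻¹ • ((2 * lam) • G.adjMatrix ℂ - (2:ℂ) • Dmat G) := by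
    rw [hiQ, hQi, Matrix.mul_smul, Matrix.smul_mul]
    congr 1
    rw [Matrix.mul_sub, Matrix.mul_smul, Matrix.mul_one, Matrix.sub_mul, Matrix.smul_mul,
      CL_eq, Matrix.mul_assoc, CSL_eq, smul_smul,
      show lam * 2 = 2 * lam from mul_comm _ _]
  have hW : (lam ^ 2 - 1) • (Dmat G - Cmat G * ⅟Q * Lmat G)
      = (lam ^ 2 + 1) • Dmat G - (2 * lam) • G.adjMatrix ℂ := by
    rw [hC, smul_sub, smul_smul, mul_inv_cancel₀ hlam, one_smul,
      show (lam ^ 2 + 1) = (lam ^ 2 - 1) + 2 by ring, add_smul]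
    abel
  have hdetD : (Dmat G).det = ∏ v : V, (G.degree v : ℂ) := Matrix.det_diagonal
  calc (lam ^ 2 - 1) ^ (Fintype.card V) * (∏ v : V, (G.degree v : ℂ)) *
        (lam • (1 : Matrix G.Dart G.Dart ℂ) - quantumU G).det
      = (lam ^ 2 - 1) ^ (Fintype.card V) *
          ((Dmat G).det * (Q - Lmat G * ⅟(Dmat G) * Cmat G).det) := by
        rw [hA, hdetD]; ring
    _ = (lam ^ 2 - 1) ^ (Fintype.card V) *
          (Q.det * (Dmat G - Cmat G * ⅟Q * Lmat G).det) := by rw [← hb22, hb11]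
    _ = Q.det * ((lam ^ 2 - 1) • (Dmat G - Cmat G * ⅟Q * Lmat G)).det := by
        rw [Matrix.det_smul]; ring
    _ = (lam ^ 2 - 1) ^ G.edgeFinset.card *
        ((lam ^ 2 + 1) • (Matrix.diagonal fun v => (G.degree v : ℂ)) -
          (2 * lam) • G.adjMatrix ℂ).det := by
        rw [hW, hQ, det_Q]
        rfl

end Generic

section Final
variable {V : Type*} [Fintype V] [DecidableEq V] (G : SimpleGraph V) [DecidableRel G.Adj]

theorem stmt1' (hdeg : ∀ v : V, 1 ≤ G.degree v) (lam : ℂ) :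
    (lam ^ 2 - 1) ^ (Fintype.card V) * (∏ v : V, (G.degree v : ℂ)) *
        (lam • (1 : Matrix G.Dart G.Dart ℂ) - quantumU G).det =
      (lam ^ 2 - 1) ^ G.edgeFinset.card *
        ((lam ^ 2 + 1) • (Matrix.diagonal fun v => (G.degree v : ℂ)) -
          (2 * lam) • G.adjMatrix ℂ).det := by
  set n := Fintype.card V
  set m := G.edgeFinset.card
  set p : ℂ[X] := ((X:ℂ[X]) ^ 2 - 1) ^ n * C (∏ v : V, (G.degree v : ℂ)) *
    ((X : ℂ[X]) • (1 : Matrix G.Dart G.Dart ℂ[X]) - (quantumU G).map C).det with hpdef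
  set q : ℂ[X] := ((X:ℂ[X]) ^ 2 - 1) ^ m *
    (((X:ℂ[X]) ^ 2 + 1) • (Matrix.diagonal fun v => ((G.degree v : ℂ[X]))) -
      ((2:ℂ[X]) * X) • G.adjMatrix ℂ[X]).det with hqdef
  have hp : ∀ z : ℂ, p.eval z = (z ^ 2 - 1) ^ n * (∏ v : V, (G.degree v : ℂ)) *
      (z • (1 : Matrix G.Dart G.Dart ℂ) - quantumU G).det := by
    intro z
    have hmap : ((X : ℂ[X]) • (1 : Matrix G.Dart G.Dart ℂ[X]) - (quantumU G).map C).map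
        (eval z) = z • (1 : Matrix G.Dart G.Dart ℂ) - quantumU G := by
      ext e f
      by_cases h : e = f <;>
        simp [Matrix.map_apply, Matrix.one_apply, h]
    have hdet := (Polynomial.evalRingHom z).map_det
      ((X : ℂ[X]) • (1 : Matrix G.Dart G.Dart ℂ[X]) - (quantumU G).map C)
    rw [hpdef]
    simp only [eval_mul, eval_pow, eval_sub, eval_one, eval_X, eval_C]
    congr 1
    rw [show (eval z) = (Polynomial.evalRingHom z : ℂ[X] → ℂ) from rfl, hdet]
    exact congrArg Matrix.det hmap
  have hq : ∀ z : ℂ, q.eval z = (z ^ 2 - 1) ^ m *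
      ((z ^ 2 + 1) • (Matrix.diagonal fun v => (G.degree v : ℂ)) -
          (2 * z) • G.adjMatrix ℂ).det := by
    intro z
    have hmap : ((((X:ℂ[X]) ^ 2 + 1) • (Matrix.diagonal fun v => ((G.degree v : ℂ[X]))) -
        ((2:ℂ[X]) * X) • G.adjMatrix ℂ[X])).map (eval z)
        = (z ^ 2 + 1) • (Matrix.diagonal fun v => (G.degree v : ℂ)) -
          (2 * z) • G.adjMatrix ℂ := by
      ext u v
      by_cases h : u = v <;> by_cases ha : G.Adj u v <;>
        simp [Matrix.map_apply, Matrix.diagonal_apply, h, ha]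
    have hdet := (Polynomial.evalRingHom z).map_det
      ((((X:ℂ[X]) ^ 2 + 1) • (Matrix.diagonal fun v => ((G.degree v : ℂ[X]))) -
        ((2:ℂ[X]) * X) • G.adjMatrix ℂ[X]))
    rw [hqdef]
    simp only [eval_mul, eval_pow, eval_sub, eval_one, eval_X]
    congr 1
    rw [show (eval z) = (Polynomial.evalRingHom z : ℂ[X] → ℂ) from rfl, hdet]
    exact congrArg Matrix.det hmap
  have hfin : ({z : ℂ | z ^ 2 - 1 = 0}).Finite := by
    have hs : {z : ℂ | z ^ 2 - 1 = 0} ⊆ {(1:ℂ), (-1:ℂ)} := by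
      intro z hz
      simp only [Set.mem_setOf_eq] at hz
      have h2 : (z - 1) * (z + 1) = 0 := by linear_combination hz
      rcases mul_eq_zero.mp h2 with h | h
      · exact Or.inl (by linear_combination h)
      · exact Or.inr (by simp only [Set.mem_singleton_iff]; linear_combination h)
    exact ((Set.finite_singleton _).insert _).subset hs
  have hinf : ({z : ℂ | z ^ 2 - 1 = 0}ᶜ).Infinite := hfin.infinite_compl
  have hsub : {z : ℂ | z ^ 2 - 1 = 0}ᶜ ⊆ {z : ℂ | p.eval z = q.eval z} := by
    intro z hz
    simp only [Set.mem_compl_iff, Set.mem_setOf_eq] at hz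
    simp only [Set.mem_setOf_eq]
    rw [hp z, hq z]
    exact generic_case G hdeg z hz
  have hpq : p = q := Polynomial.eq_of_infinite_eval_eq p q (hinf.mono hsub)
  have := congrArg (Polynomial.eval lam) hpq
  rw [hp lam, hq lam] at this
  exact this

end Final

theorem stmt1 {V : Type*} [Fintype V] [DecidableEq V] (G : SimpleGraph V)
    [DecidableRel G.Adj] (hconn : G.Connected) (hdeg : ∀ v : V, 1 ≤ G.degree v)
    (lam : ℂ) :
    (lam ^ 2 - 1) ^ (Fintype.card V) * (∏ v : V, (G.degree v : ℂ)) *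
        (lam • (1 : Matrix G.Dart G.Dart ℂ) - quantumU G).det =
      (lam ^ 2 - 1) ^ G.edgeFinset.card *
        ((lam ^ 2 + 1) • (Matrix.diagonal fun v => (G.degree v : ℂ)) -
          (2 * lam) • G.adjMatrix ℂ).det :=
  stmt1' G hdeg lam
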